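/- Let Δ ≥ 0 be a real number and let x : ℕ → S satisfy |f(s)·N − n(s,N)| ≤ Δ for all s ∈ S and all N ∈ ℕ. If s ∈ S, ℓ ∈ ℕ, and m ∈ ℕ are such that x_m = s and n(s, m+1) = ℓ + 1 (i.e. m is the index of the (ℓ+1)-th occurrence of s, so the asymmetric-numeral-system encoding satisfies C(s,ℓ) = m), then |m − ((ℓ+1)/f(s) − 1)| ≤ Δ/f(s). -/
import Mathlib

open Finset

/-- The number of occurrences of the symbol `s` among the first `N` terms of `x`. -/
def nOcc {S : Type*} [DecidableEq S] (x : ℕ → S) (s : S) (N : ℕ) : ℕ :=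
  ((Finset.range N).filter fun k => x k = s).card

theorem stmt_9 {S : Type*} [Fintype S] [DecidableEq S] [Nonempty S]
    (f : S → ℝ) (hf0 : ∀ s, 0 < f s) (hf1 : ∀ s, f s ≤ 1)
    (hsum : ∑ s, f s = 1)
    (Δ : ℝ) (hΔ : 0 ≤ Δ)
    (x : ℕ → S)
    (hdisc : ∀ (s : S) (N : ℕ), |f s * (N : ℝ) - (nOcc x s N : ℝ)| ≤ Δ)
    (s : S) (ℓ m : ℕ)
    (hx : x m = s) (hocc : nOcc x s (m + 1) = ℓ + 1) :
    |(m : ℝ) - (((ℓ : ℝ) + 1) / f s - 1)| ≤ Δ / f s := by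
  have hf := hf0 s
  have h := hdisc s (m + 1)
  rw [hocc] at h
  push_cast at h
  rw [show ((m : ℝ) - (((ℓ : ℝ) + 1) / f s - 1))
      = (f s * ((m : ℝ) + 1) - ((ℓ : ℝ) + 1)) / f s by field_simp; ring,
    abs_div, abs_of_pos hf]
  gcongr
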